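/- Let k ≥ 1 be a natural number and S ≥ 12 a real. Suppose r ≥ (2/3)·S̄_i³·S_i/S³ for all i ∈ {1,...,k}, where S̄_i = S - S_i ≥ 0 and Σ_i S̄_i ≥ S - 1. Then r ≥ min_i S_i/(2k³). -/

import Mathlib

theorem lemma2_full (k : ℕ) (hk : 1 ≤ k) (S r : ℝ) (hS : S ≥ 12)
    (Si : Fin k → ℝ) (hSi : ∀ i, 0 ≤ Si i ∧ Si i ≤ S)
    (hsum : ∑ i, (S - Si i) ≥ S - 1)
    (hne : (Finset.univ : Finset (Fin k)).Nonempty)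
    (hr : ∀ i, r ≥ (2 / 3) * (S - Si i) ^ 3 * Si i / S ^ 3) :
    r ≥ (Finset.univ.inf' hne Si) / (2 * k ^ 3) := by
  obtain ⟨i, -, hi⟩ := Finset.exists_max_image Finset.univ (fun i => S - Si i) hne
  have hS0 : (0:ℝ) < S := by linarith
  have hk0 : (0:ℝ) < (k:ℝ) := by exact_mod_cast hk
  have hbar : (k:ℝ) * (S - Si i) ≥ S - 1 := by
    calc (k:ℝ) * (S - Si i) = ∑ _j : Fin k, (S - Si i) := by
          simp [Finset.sum_const, Finset.card_univ]; ring
      _ ≥ ∑ j, (S - Si j) := Finset.sum_le_sum (fun j _ => hi j (Finset.mem_univ j))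
      _ ≥ S - 1 := hsum
  have hSi0 := (hSi i).1
  have hmin : Finset.univ.inf' hne Si ≤ Si i := Finset.inf'_le _ (Finset.mem_univ i)
  have hbarnn : 0 ≤ S - Si i := by linarith [(hSi i).2]
  have hcube : (S - 1)^3 ≤ (k:ℝ)^3 * (S - Si i)^3 := by
    rw [← mul_pow]
    exact pow_le_pow_left₀ (by linarith) (by linarith) 3
  have hA : S^3 ≤ (4/3)*(S-1)^3 := by
    nlinarith [mul_nonneg (sq_nonneg S) (by linarith : (0:ℝ) ≤ S - 12)]
  have hkey : (2/3) * (S - Si i)^3 * Si i / S^3 ≥ Si i / (2 * (k:ℝ)^3) := by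
    rw [ge_iff_le, div_le_div_iff₀ (by positivity) (by positivity)]
    nlinarith [mul_le_mul_of_nonneg_left hcube hSi0,
      mul_le_mul_of_nonneg_left hA hSi0]
  calc r ≥ (2/3) * (S - Si i)^3 * Si i / S^3 := hr i
    _ ≥ Si i / (2 * (k:ℝ)^3) := hkey
    _ ≥ Finset.univ.inf' hne Si / (2 * (k:ℝ)^3) := by
        apply div_le_div_of_nonneg_right hmin (by positivity) |>.trans_eq rfl
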